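/- arXiv:1607.01482 — 5 statements merged into one kernel-verified Lean document; each statement's English description precedes it below -/
import Mathlib

section
/- For the two-agent system ẋ₁ = q(x₂) - x₁, ẋ₂ = q(x₁) - x₂, the constant function x(t) = (1/2, 1/2) is a Krasowskii solution but not a Carathéodory solution; equivalently, the zero vector lies in the closed convex hull of the set of limit values of the vector field f(x) = (q(x₂) - x₁, q(x₁) - x₂) at the point (1/2, 1/2), while f(1/2, 1/2) ≠ 0. -/
noncomputable def q (s : ℝ) : ℤ := ⌊s + 1/2⌋

/-- The two-agent vector field f(x₁,x₂) = (q(x₂) - x₁, q(x₁) - x₂). -/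
noncomputable def f (p : ℝ × ℝ) : ℝ × ℝ := ((q p.2 : ℝ) - p.1, (q p.1 : ℝ) - p.2)

/-- Krasowskii set-valued map: K f(x) = ⋂_{δ>0} cl co { f(y) : ‖y - x‖ < δ }. -/
noncomputable def Kras (x : ℝ × ℝ) : Set (ℝ × ℝ) :=
  ⋂ δ > (0 : ℝ), closure (convexHull ℝ (f '' {y | ‖y - x‖ < δ}))

lemma q_half : q (1/2) = 1 := by
  unfold q; norm_num

lemma q_small (η : ℝ) (h0 : 0 < η) (h1 : η ≤ 1) : q (1/2 - η) = 0 := by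
  unfold q
  rw [Int.floor_eq_zero_iff]
  constructor <;> simp <;> linarith

theorem half_half_Krasowskii_not_Caratheodory :
    (0 : ℝ × ℝ) ∈ Kras (1/2, 1/2) ∧ f (1/2, 1/2) ≠ 0 := by
  constructor
  · simp only [Kras, Set.mem_iInter]
    intro δ hδ
    rw [Metric.mem_closure_iff]
    intro ε hε
    set η : ℝ := min (min δ ε) 1 / 2 with hη
    have hη0 : 0 < η := by positivity
    have hηδ : η < δ := by
      have : min (min δ ε) 1 ≤ δ := le_trans (min_le_left _ _) (min_le_left _ _)
      linarith
    have hηε : η ≤ ε / 2 := by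
      have : min (min δ ε) 1 ≤ ε := le_trans (min_le_left _ _) (min_le_right _ _)
      linarith
    have hη1 : η ≤ 1 := by
      have : min (min δ ε) 1 ≤ 1 := min_le_right _ _
      linarith
    set S := f '' {y : ℝ × ℝ | ‖y - (1/2, 1/2)‖ < δ}
    have ha : ((1/2 : ℝ), (1/2 : ℝ)) ∈ S := by
      refine ⟨(1/2, 1/2), by simp [hδ], ?_⟩
      have hq : ((q (2⁻¹:ℝ)) : ℝ) = 1 := by
        rw [show (2⁻¹:ℝ) = 1/2 by norm_num, q_half]; norm_num
      simp [f, hq]; norm_num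
    have hb : ((η - 1/2 : ℝ), (η - 1/2 : ℝ)) ∈ S := by
      refine ⟨(1/2 - η, 1/2 - η), ?_, ?_⟩
      · simp only [Set.mem_setOf_eq, Prod.norm_def, Prod.fst_sub, Prod.snd_sub]
        simp [abs_of_pos hη0, hηδ]
      · have hq : ((q (2⁻¹ - η : ℝ)) : ℝ) = 0 := by
          rw [show (2⁻¹:ℝ) - η = 1/2 - η by norm_num, q_small η hη0 hη1]; norm_num
        simp [f, hq]
    have hmid : ((η/2 : ℝ), (η/2 : ℝ)) ∈ convexHull ℝ S := by
      have := (convex_convexHull ℝ S) (subset_convexHull ℝ S ha)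
        (subset_convexHull ℝ S hb) (by norm_num : (0:ℝ) ≤ 1/2)
        (by norm_num : (0:ℝ) ≤ 1/2) (by norm_num : (1/2 : ℝ) + 1/2 = 1)
      convert this using 2
      · simp [Prod.smul_def]; ring
      · simp [Prod.smul_def]; ring
    refine ⟨_, hmid, ?_⟩
    simp only [dist_eq_norm, zero_sub, Prod.norm_def, norm_neg, Prod.fst_neg, Prod.snd_neg]
    simp only [max_self, Real.norm_eq_abs]
    rw [abs_of_pos (by positivity)]
    linarith
  · intro h
    have h1 : ((q ((1:ℝ)/2)):ℝ) - 1/2 = 0 := congrArg Prod.fst h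
    rw [q_half] at h1
    norm_num at h1
end

section
/- From the point x₀ = (1/2, 1/2) there are exactly two (forward) Carathéodory solutions of the system ẋ₁ = q(x₂) - x₁, ẋ₂ = q(x₁) - x₂: one converging to (0,0) along the diagonal segment, namely x(t) = (e^{-t}/2, e^{-t}/2), and one converging to (1,1), namely x(t) = (1 - e^{-t}/2, 1 - e^{-t}/2). In particular, both functions t ↦ ((1/2)e^{-t}, (1/2)e^{-t}) and t ↦ (1 - (1/2)e^{-t}, 1 - (1/2)e^{-t}) on [0,∞) satisfy the system for almost every t > 0 with initial condition (1/2, 1/2); hence Carathéodory solutions are not unique. -/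
open MeasureTheory

/-- Solution sliding to (0,0). -/
noncomputable def sol₁ (t : ℝ) : ℝ × ℝ :=
  ((1/2) * Real.exp (-t), (1/2) * Real.exp (-t))

/-- Solution sliding to (1,1). -/
noncomputable def sol₂ (t : ℝ) : ℝ × ℝ :=
  (1 - (1/2) * Real.exp (-t), 1 - (1/2) * Real.exp (-t))

/-- `x` is a Carathéodory-type solution of ẋ₁ = q(x₂) - x₁, ẋ₂ = q(x₁) - x₂ on (0,∞)
with initial condition (1/2, 1/2). -/
def IsSol (x : ℝ → ℝ × ℝ) : Prop :=
  x 0 = (1/2, 1/2) ∧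
  (∀ᵐ t ∂(volume : Measure ℝ), 0 < t →
    HasDerivAt (fun s => (x s).1) ((q (x t).2 : ℝ) - (x t).1) t ∧
    HasDerivAt (fun s => (x s).2) ((q (x t).1 : ℝ) - (x t).2) t)

lemma exp_bounds {t : ℝ} (ht : 0 < t) :
    0 < (1/2) * Real.exp (-t) ∧ (1/2) * Real.exp (-t) < 1/2 := by
  constructor
  · positivity
  · have : Real.exp (-t) < 1 := Real.exp_lt_one_iff.mpr (by linarith)
    linarith

lemma hasDeriv_exp (t : ℝ) :
    HasDerivAt (fun s : ℝ => (1/2) * Real.exp (-s)) (-((1/2) * Real.exp (-t))) t := by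
  have h := (Real.hasDerivAt_exp (-t)).comp t (hasDerivAt_neg t)
  have : HasDerivAt (fun y : ℝ => (1/2 : ℝ) * Real.exp (-y)) ((1/2 : ℝ) * (Real.exp (-t) * -1)) t :=
    h.const_mul (1/2 : ℝ)
  convert this using 1
  ring

theorem two_Caratheodory_solutions :
    IsSol sol₁ ∧ IsSol sol₂ ∧ sol₁ ≠ sol₂ ∧
    (Filter.Tendsto sol₁ Filter.atTop (nhds (0, 0))) ∧
    (Filter.Tendsto sol₂ Filter.atTop (nhds (1, 1))) := by
  have hexp0 : Real.exp (0:ℝ) = 1 := Real.exp_zero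
  have htend : Filter.Tendsto (fun t : ℝ => (1/2) * Real.exp (-t)) Filter.atTop (nhds 0) := by
    have := Real.tendsto_exp_neg_atTop_nhds_zero
    simpa using this.const_mul (1/2 : ℝ)
  refine ⟨⟨?_, ?_⟩, ⟨?_, ?_⟩, ?_, ?_, ?_⟩
  · simp [sol₁]
  · refine Filter.Eventually.of_forall fun t ht => ?_
    obtain ⟨h1, h2⟩ := exp_bounds ht
    have hq : q (sol₁ t).2 = 0 := by
      simp only [sol₁, q]
      rw [Int.floor_eq_zero_iff]
      constructor <;> simp <;> linarith
    have hderiv := hasDeriv_exp t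
    have hq0 : ((q (sol₁ t).2 : ℤ) : ℝ) = 0 := by rw [hq]; simp
    have hq0' : ((q (sol₁ t).1 : ℤ) : ℝ) = 0 := hq0
    constructor <;>
    · simp only [hq0, hq0']
      simp only [sol₁]
      convert hderiv using 1
      ring
  · simp [sol₂]; norm_num
  · refine Filter.Eventually.of_forall fun t ht => ?_
    obtain ⟨h1, h2⟩ := exp_bounds ht
    have hq : q (sol₂ t).1 = 1 := by
      simp only [sol₂, q]
      rw [Int.floor_eq_iff]
      push_cast
      constructor <;> linarith
    have hderiv : HasDerivAt (fun s : ℝ => 1 - (1/2) * Real.exp (-s))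
        ((1/2) * Real.exp (-t)) t := by
      have := (hasDeriv_exp t).const_sub 1
      simpa using this
    have hq1 : ((q (sol₂ t).1 : ℤ) : ℝ) = 1 := by rw [hq]; simp
    have hq1' : ((q (sol₂ t).2 : ℤ) : ℝ) = 1 := hq1
    constructor <;>
    · simp only [hq1, hq1']
      simp only [sol₂]
      convert hderiv using 1
      ring
  · intro h
    have h1 := congrArg Prod.fst (congrFun h 1)
    simp [sol₁, sol₂] at h1
    have : Real.exp (-1:ℝ) < 1 := Real.exp_lt_one_iff.mpr (by norm_num)
    linarith
  · exact htend.prodMk_nhds htend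
  · have : Filter.Tendsto (fun t : ℝ => 1 - (1/2) * Real.exp (-t)) Filter.atTop (nhds 1) := by
      simpa using (htend.const_sub 1)
    exact (this.prodMk_nhds this)
end

section
/- Let N ≥ 2 and let k : {1,…,N} → ℤ satisfy |k_i - k_{i-1}| ≤ min(i - 2, N - i) for all 2 ≤ i ≤ N. Then for all i, j, |k_j - k_i| ≤ (N-2)²/4. -/
private def tvS (M : ℕ) : ℤ := ∑ j ∈ Finset.range (M + 1), min (j : ℤ) ((M : ℤ) - j)

private lemma tvS_rec (M : ℕ) : tvS (M + 2) = tvS M + (M + 1) := by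
  unfold tvS
  rw [show M + 2 + 1 = (M + 2) + 1 from rfl, Finset.sum_range_succ, Finset.sum_range_succ']
  push_cast
  have h1 : ((M : ℤ) + 2) ⊓ ((M : ℤ) + 2 - ((M : ℤ) + 2)) = 0 := by omega
  have h2 : (0 : ℤ) ⊓ ((M : ℤ) + 2 - 0) = 0 := by omega
  rw [h1, h2, add_zero, add_zero]
  have : ∀ i ∈ Finset.range (M + 1),
      min ((i : ℤ) + 1) ((M : ℤ) + 2 - ((i : ℤ) + 1)) = min (i : ℤ) ((M : ℤ) - i) + 1 := by
    intro i _; omega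
  rw [Finset.sum_congr rfl this, Finset.sum_add_distrib]
  simp [mul_comm]

private lemma tvS_bound (M : ℕ) : 4 * tvS M ≤ (M : ℤ) ^ 2 := by
  induction M using Nat.strong_induction_on with
  | _ M ih =>
    match M with
    | 0 => simp [tvS]
    | 1 => norm_num [tvS, Finset.sum_range_succ]
    | (M + 2) =>
      have h1 := ih M (by omega)
      have h2 := tvS_rec M
      push_cast
      nlinarith

private lemma tvS_nonneg (M : ℕ) : 0 ≤ tvS M := by
  apply Finset.sum_nonneg
  intro j hj
  simp only [Finset.mem_range] at hj
  omega

theorem total_variation_bound (N : ℕ) (hN : 2 ≤ N) (k : ℕ → ℤ)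
    (h : ∀ i : ℕ, 2 ≤ i → i ≤ N →
      |k i - k (i - 1)| ≤ min ((i : ℤ) - 2) ((N : ℤ) - i)) :
    ∀ i j : ℕ, 1 ≤ i → i ≤ N → 1 ≤ j → j ≤ N →
      (|k j - k i| : ℝ) ≤ ((N : ℝ) - 2) ^ 2 / 4 := by
  -- step bound function
  set g : ℕ → ℤ := fun t => min ((t : ℤ) - 2) ((N : ℤ) - t) with hg
  -- telescoping
  have tel : ∀ j i : ℕ, 1 ≤ i → i ≤ j → j ≤ N →
      |k j - k i| ≤ ∑ t ∈ Finset.Ico (i + 1) (j + 1), g t := by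
    intro j
    induction j with
    | zero => intro i h1 h2 _; omega
    | succ j ihj =>
      intro i h1 h2 h3
      rcases eq_or_lt_of_le h2 with rfl | hlt
      · simp
      · have hij : i ≤ j := by omega
        have hsum := ihj i h1 hij (by omega)
        have hstep : |k (j + 1) - k j| ≤ g (j + 1) := by
          have := h (j + 1) (by omega) h3
          simpa [hg] using this
        have := Finset.sum_Ico_succ_top (by omega : i + 1 ≤ j + 1) g
        rw [this]
        calc |k (j + 1) - k i| ≤ |k j - k i| + |k (j + 1) - k j| := by
              have := abs_add_le (k j - k i) (k (j + 1) - k j); ring_nf at this ⊢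
              simpa [add_comm] using this
          _ ≤ (∑ t ∈ Finset.Ico (i + 1) (j + 1), g t) + g (j + 1) := by
              exact add_le_add hsum hstep
  -- nonnegativity of g on [2, N]
  have hgnn : ∀ t : ℕ, 2 ≤ t → t ≤ N → 0 ≤ g t := by
    intro t h1 h2; simp only [hg, le_min_iff]
    constructor <;> omega
  -- total sum over [2, N] equals tvS (N-2)
  have htot : ∑ t ∈ Finset.Ico 2 (N + 1), g t = tvS (N - 2) := by
    rw [Finset.sum_Ico_eq_sum_range]
    have hr : N + 1 - 2 = (N - 2) + 1 := by omega
    rw [hr]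
    unfold tvS
    apply Finset.sum_congr rfl
    intro j hj
    simp only [Finset.mem_range] at hj
    simp only [hg]
    have : ((N - 2 : ℕ) : ℤ) = (N : ℤ) - 2 := by omega
    push_cast [this]
    omega
  -- key integer bound
  have key : ∀ i j : ℕ, 1 ≤ i → i ≤ j → j ≤ N → 4 * |k j - k i| ≤ ((N : ℤ) - 2) ^ 2 := by
    intro i j h1 h2 h3
    have t1 := tel j i h1 h2 h3
    have t2 : ∑ t ∈ Finset.Ico (i + 1) (j + 1), g t ≤ ∑ t ∈ Finset.Ico 2 (N + 1), g t := by
      apply Finset.sum_le_sum_of_subset_of_nonneg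
      · intro t ht
        simp only [Finset.mem_Ico] at ht ⊢
        omega
      · intro t ht _
        simp only [Finset.mem_Ico] at ht
        exact hgnn t ht.1 (by omega)
    have t3 := tvS_bound (N - 2)
    have t4 : ((N - 2 : ℕ) : ℤ) = (N : ℤ) - 2 := by omega
    rw [htot] at t2
    rw [t4] at t3
    nlinarith
  -- finish, handling both orders
  intro i j h1 h2 h3 h4
  have main : 4 * |k j - k i| ≤ ((N : ℤ) - 2) ^ 2 := by
    rcases le_total i j with hij | hij
    · exact key i j h1 hij h4
    · have := key j i h3 hij h2
      rwa [abs_sub_comm] at this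
  have main' : (4 : ℝ) * |(k j : ℝ) - (k i : ℝ)| ≤ ((N : ℝ) - 2) ^ 2 := by
    exact_mod_cast main
  linarith
end

section
/- For the complete-graph dynamics ẋ_i = Σ_{j≠i} (q(x_j) - x_i) on N ≥ 2 agents, the set of extended equilibria equals { h·𝟏 : h ∈ ℤ }, i.e., x* is an extended equilibrium if and only if all components of x* equal a common integer h. -/
open Finset

theorem complete_graph_extended_equilibria (N : ℕ) (hN : 2 ≤ N) (x : Fin N → ℝ) :
    (∃ k : Fin N → ℤ,
      (∀ i, ∑ j ∈ univ \ {i}, ((k j : ℝ) - x i) = 0) ∧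
      (∀ i, (k i : ℝ) - 1/2 ≤ x i ∧ x i ≤ (k i : ℝ) + 1/2)) ↔
    (∃ h : ℤ, ∀ i, x i = (h : ℝ)) := by
  constructor
  · rintro ⟨k, heq, hbd⟩
    set S : ℤ := ∑ j, k j with hS
    have hN1 : (1:ℝ) ≤ (N:ℝ) - 1 := by
      have : (2:ℝ) ≤ (N:ℝ) := by exact_mod_cast hN
      linarith
    have hcard : ∀ i : Fin N, (univ \ ({i} : Finset (Fin N))).card = N - 1 := by
      intro i
      rw [card_sdiff_of_subset (by simp), card_univ, card_singleton, Fintype.card_fin]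
    have hsumk : ∀ i : Fin N, ∑ j ∈ univ \ {i}, (k j : ℝ) = (S : ℝ) - k i := by
      intro i
      have h1 := Finset.sum_sdiff (s₁ := ({i} : Finset (Fin N))) (s₂ := univ)
        (f := fun j => (k j : ℝ)) (by simp)
      simp only [Finset.sum_singleton] at h1
      have h2 : ((S : ℤ) : ℝ) = ∑ j, (k j : ℝ) := by
        rw [hS]; push_cast; ring_nf
      linarith [h1, h2.symm.le]
    have key : ∀ i : Fin N, ((N:ℝ) - 1) * x i = (S : ℝ) - k i := by
      intro i
      have h1 := heq i
      rw [Finset.sum_sub_distrib, hsumk, Finset.sum_const, hcard] at h1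
      have hc : ((N - 1 : ℕ) : ℝ) = (N:ℝ) - 1 := by
        rw [Nat.cast_sub (by omega : 1 ≤ N)]; simp
      rw [nsmul_eq_mul, hc] at h1
      linarith
    have hkeq : ∀ i j : Fin N, k i = k j := by
      intro i j
      have hi := key i
      have hj := key j
      have hbi := hbd i
      have hbj := hbd j
      have heqn : (N:ℝ) * ((k j : ℝ) - k i) =
          ((N:ℝ) - 1) * ((x i - k i) - (x j - k j)) := by
        nlinarith [hi, hj]
      have habs : |((k j - k i : ℤ) : ℝ)| < 1 := by
        rw [abs_lt]
        push_cast
        constructor <;> nlinarith [heqn, hbi.1, hbi.2, hbj.1, hbj.2, hN1]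
      have hz : (k j - k i : ℤ) = 0 := by
        by_contra hc
        have h1 : (1:ℤ) ≤ |k j - k i| := Int.one_le_abs (by omega)
        have h2 : (1:ℝ) ≤ |((k j - k i : ℤ) : ℝ)| := by
          rw [← Int.cast_abs]; exact_mod_cast h1
        linarith
      omega
    have i0 : Fin N := ⟨0, by omega⟩
    refine ⟨k i0, fun i => ?_⟩
    have hall : ∀ j, k j = k i0 := fun j => hkeq j i0
    have hSval : (S : ℝ) = (N:ℝ) * (k i0 : ℝ) := by
      rw [hS]
      push_cast
      rw [Finset.sum_congr rfl (fun j _ => by rw [hall j])]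
      simp [Finset.sum_const, mul_comm]
    have hi := key i
    rw [hall i, hSval] at hi
    have : ((N:ℝ) - 1) * x i = ((N:ℝ) - 1) * (k i0 : ℝ) := by linarith
    have hne : ((N:ℝ) - 1) ≠ 0 := by linarith
    exact mul_left_cancel₀ hne this
  · rintro ⟨h, hx⟩
    refine ⟨fun _ => h, fun i => ?_, fun i => ?_⟩
    · simp [hx]
    · constructor <;> simp [hx]
end

section
/- Let N ≥ 2, k ∈ ℤᴺ, K = Σ_j k_j. If for every i, (N-1)(k_i - 1/2) ≤ K - k_i ≤ (N-1)(k_i + 1/2), then all the k_i are equal. -/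
theorem complete_graph_integer_lemma (N : ℕ) (hN : 2 ≤ N) (k : Fin N → ℤ)
    (h : ∀ i, ((N : ℚ) - 1) * ((k i : ℚ) - 1/2) ≤ (∑ j, (k j : ℚ)) - k i ∧
      (∑ j, (k j : ℚ)) - k i ≤ ((N : ℚ) - 1) * ((k i : ℚ) + 1/2)) :
    ∀ i j, k i = k j := by
  intro i j
  obtain ⟨hi1, hi2⟩ := h i
  obtain ⟨hj1, hj2⟩ := h j
  have hN' : (2:ℚ) ≤ (N:ℚ) := by exact_mod_cast hN
  have key : |(N:ℚ) * ((k i : ℚ) - k j)| ≤ (N:ℚ) - 1 := by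
    rw [abs_le]; constructor <;> nlinarith
  have h1 : |((k i - k j : ℤ) : ℚ)| < 1 := by
    push_cast
    rw [abs_lt]
    rw [abs_le] at key
    constructor <;> nlinarith
  have h2 : |k i - k j| < 1 := by exact_mod_cast h1
  rw [abs_lt] at h2; omega
end
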